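/- Let α ∈ (0,∞). Let F be a map assigning to every measure-preserving function f : (X,p) → (Y,q) between finite measure spaces a number F(f) ∈ [0,∞). Suppose F satisfies: (1) Functoriality: F(f ∘ g) = F(f) + F(g); (2) Additivity: F(f ⊕ g) = F(f) + F(g); (3) Homogeneity of degree α: F(λf) = λ^α F(f) for all λ ∈ [0,∞); (4) Continuity. Then there exists a constant c ≥ 0 such that F(f) = c(H_α(p) − H_α(q)) for every measure-preserving f : (X,p) → (Y,q), where H_α is the extended Tsallis entropy of order α. Conversely, for any constant c ≥ 0 this formula determines a map F obeying conditions (1)–(4). -/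

import Mathlib

open scoped BigOperators Classical
open Filter Topology Real

/-- `p` is a probability measure on the finite set `X`. -/
def IsProb {X : Type} [Fintype X] (p : X → ℝ) : Prop :=
  (∀ i, 0 ≤ p i) ∧ ∑ i, p i = 1

/-- `p` is a (nonnegative) measure on the finite set `X`. -/
def IsMeas {X : Type} [Fintype X] (p : X → ℝ) : Prop :=
  ∀ i, 0 ≤ p i

/-- `f` is a measure-preserving function from `(X, p)` to `(Y, q)`. -/
def IsMP {X Y : Type} [Fintype X] [Fintype Y] (p : X → ℝ) (q : Y → ℝ) (f : X → Y) : Prop :=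
  ∀ j : Y, q j = ∑ i, if f i = j then p i else 0

/-- Shannon entropy (with the convention `0 * log 0 = 0`, automatic since `Real.log 0 = 0`). -/
noncomputable def shannon {X : Type} [Fintype X] (p : X → ℝ) : ℝ :=
  -∑ i, p i * Real.log (p i)

/-- The convex combination `λ p ⊕ (1 - λ) q` on the disjoint union. -/
noncomputable def cvx (lam : ℝ) {X Y : Type} (p : X → ℝ) (q : Y → ℝ) : X ⊕ Y → ℝ :=
  Sum.elim (fun i => lam * p i) (fun j => (1 - lam) * q j)

/-- The direct sum `p ⊕ q` on the disjoint union. -/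
def dsum {X Y : Type} (p : X → ℝ) (q : Y → ℝ) : X ⊕ Y → ℝ :=
  Sum.elim p q

/-- Extended Shannon entropy of a measure on a finite set. -/
noncomputable def shannonExt {X : Type} [Fintype X] (p : X → ℝ) : ℝ :=
  if (∑ i, p i) = 0 then 0 else (∑ i, p i) * shannon (fun i => p i / ∑ j, p j)

/-- Tsallis entropy of order `α` of a probability measure. -/
noncomputable def tsallis (α : ℝ) {X : Type} [Fintype X] (p : X → ℝ) : ℝ :=
  if α = 1 then shannon p else (1 / (α - 1)) * (1 - ∑ i, p i ^ α)

/-- Extended Tsallis entropy of order `α` of a measure on a finite set. -/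
noncomputable def tsallisExt (α : ℝ) {X : Type} [Fintype X] (p : X → ℝ) : ℝ :=
  if (∑ i, p i) = 0 then 0 else (∑ i, p i) ^ α * tsallis α (fun i => p i / ∑ j, p j)

/-- The conditions of Corollary 7: nonnegativity, functoriality, additivity,
homogeneity of degree `α`, and continuity, for a map on measure-preserving
functions between finite measure spaces. -/
def TsallisConds (α : ℝ)
    (F : ∀ {X Y : Type} [Fintype X] [Fintype Y], (X → ℝ) → (Y → ℝ) → (X → Y) → ℝ) :
    Prop :=
  (∀ {X Y : Type} [Fintype X] [Fintype Y] (p : X → ℝ) (q : Y → ℝ) (f : X → Y),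
    IsMeas p → IsMeas q → IsMP p q f → 0 ≤ F p q f) ∧
  (∀ {X Y Z : Type} [Fintype X] [Fintype Y] [Fintype Z]
    (p : X → ℝ) (q : Y → ℝ) (r : Z → ℝ) (g : X → Y) (f : Y → Z),
    IsMeas p → IsMeas q → IsMeas r → IsMP p q g → IsMP q r f →
    F p r (f ∘ g) = F q r f + F p q g) ∧
  (∀ {X X' Y Y' : Type} [Fintype X] [Fintype X'] [Fintype Y] [Fintype Y']
    (p : X → ℝ) (p' : X' → ℝ) (q : Y → ℝ) (q' : Y' → ℝ) (f : X → X') (g : Y → Y'),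
    IsMeas p → IsMeas p' → IsMeas q → IsMeas q' → IsMP p p' f → IsMP q q' g →
    F (dsum p q) (dsum p' q') (Sum.map f g) = F p p' f + F q q' g) ∧
  (∀ {X Y : Type} [Fintype X] [Fintype Y] (p : X → ℝ) (q : Y → ℝ) (f : X → Y)
    (lam : ℝ), 0 ≤ lam → IsMeas p → IsMeas q → IsMP p q f →
    F (fun i => lam * p i) (fun j => lam * q j) f = lam ^ α * F p q f) ∧
  (∀ {X Y : Type} [Fintype X] [Fintype Y]
    (pn : ℕ → X → ℝ) (qn : ℕ → Y → ℝ) (fn : ℕ → X → Y)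
    (p : X → ℝ) (q : Y → ℝ) (f : X → Y),
    (∀ n, IsMeas (pn n)) → (∀ n, IsMeas (qn n)) → (∀ n, IsMP (pn n) (qn n) (fn n)) →
    IsMeas p → IsMeas q → IsMP p q f →
    (∀ᶠ n in atTop, fn n = f) →
    (∀ i, Tendsto (fun n => pn n i) atTop (𝓝 (p i))) →
    (∀ j, Tendsto (fun n => qn n j) atTop (𝓝 (q j))) →
    Tendsto (fun n => F (pn n) (qn n) (fn n)) atTop (𝓝 (F p q f)))

noncomputable def phiF (α : ℝ) (t : ℝ) : ℝ :=
  if α = 1 then t * Real.log t else (α - 1)⁻¹ * t ^ α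

lemma phiF_zero {α : ℝ} (hα : α ≠ 0) : phiF α 0 = 0 := by
  unfold phiF; split <;> simp [Real.zero_rpow hα]

lemma phiF_continuous {α : ℝ} (hα : 0 < α) : Continuous (phiF α) := by
  unfold phiF; split
  · exact Real.continuous_mul_log
  · exact continuous_const.mul
      (continuous_iff_continuousAt.2 fun x => Real.continuousAt_rpow_const x α (Or.inr hα.le))

lemma sum_eq_of_isMP {X Y : Type} [Fintype X] [Fintype Y] {p : X → ℝ} {q : Y → ℝ} {f : X → Y}
    (h : IsMP p q f) : ∑ j, q j = ∑ i, p i := by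
  calc ∑ j, q j = ∑ j, ∑ i, if f i = j then p i else 0 :=
        Finset.sum_congr rfl fun j _ => h j
    _ = ∑ i, ∑ j, if f i = j then p i else 0 := Finset.sum_comm
    _ = ∑ i, p i := by simp

lemma tsallisExt_eq_phiF (α : ℝ) (hα : 0 < α) {X : Type} [Fintype X] (p : X → ℝ)
    (hp : IsMeas p) :
    tsallisExt α p = phiF α (∑ i, p i) - ∑ i, phiF α (p i) := by
  by_cases hs : (∑ i, p i) = 0
  · have hzero : ∀ i, p i = 0 := by
      intro i
      have h1 : p i ≤ 0 := hs ▸ Finset.single_le_sum (fun j _ => hp j) (Finset.mem_univ i)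
      exact le_antisymm h1 (hp i)
    simp [tsallisExt, hs, phiF_zero hα.ne', hzero]
  · have hspos : 0 < ∑ i, p i :=
      lt_of_le_of_ne (Finset.sum_nonneg fun i _ => hp i) (Ne.symm hs)
    set s := ∑ i, p i with hsdef
    rw [tsallisExt, if_neg hs, tsallis]
    by_cases h1 : α = 1
    · subst h1
      rw [if_pos rfl]
      unfold phiF shannon
      simp only [if_pos rfl, Real.rpow_one]
      have hterm : ∀ i, s * ((p i / s) * Real.log (p i / s))
          = p i * Real.log (p i) - p i * Real.log s := by
        intro i
        by_cases hpi : p i = 0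
        · simp [hpi]
        · have : p i / s * Real.log (p i / s) = p i / s * (Real.log (p i) - Real.log s) := by
            rw [Real.log_div hpi hs]
          rw [this]
          field_simp
      rw [mul_neg, Finset.mul_sum]
      rw [Finset.sum_congr rfl fun i _ => hterm i]
      rw [Finset.sum_sub_distrib, ← Finset.sum_mul, ← hsdef]
      simp only [if_true]
      ring
    · rw [if_neg h1]
      unfold phiF
      simp only [if_neg h1]
      have hterm : ∀ i, s ^ α * (p i / s) ^ α = p i ^ α := by
        intro i
        rw [Real.div_rpow (hp i) hspos.le]
        field_simp
      have hsum : ∑ i, p i ^ α = s ^ α * ∑ i, (p i / s) ^ α := by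
        rw [Finset.mul_sum]
        exact Finset.sum_congr rfl fun i _ => (hterm i).symm
      rw [← hsdef, ← Finset.mul_sum, hsum]
      ring

lemma real_add_rpow_le {z a b : ℝ} (hz : 1 ≤ z) (ha : 0 ≤ a) (hb : 0 ≤ b) :
    a ^ z + b ^ z ≤ (a + b) ^ z := by
  have h := NNReal.add_rpow_le_rpow_add a.toNNReal b.toNNReal hz
  have h2 := NNReal.coe_le_coe.2 h
  rw [NNReal.coe_add, NNReal.coe_rpow, NNReal.coe_rpow, NNReal.coe_rpow,
    ← Real.toNNReal_add ha hb] at h2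
  rwa [Real.coe_toNNReal a ha, Real.coe_toNNReal b hb,
    Real.coe_toNNReal _ (add_nonneg ha hb)] at h2

lemma real_rpow_add_le {z a b : ℝ} (hz : 0 ≤ z) (hz1 : z ≤ 1) (ha : 0 ≤ a) (hb : 0 ≤ b) :
    (a + b) ^ z ≤ a ^ z + b ^ z := by
  have h := NNReal.rpow_add_le_add_rpow a.toNNReal b.toNNReal hz hz1
  have h2 := NNReal.coe_le_coe.2 h
  rw [NNReal.coe_add, NNReal.coe_rpow, NNReal.coe_rpow, NNReal.coe_rpow,
    ← Real.toNNReal_add ha hb] at h2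
  rwa [Real.coe_toNNReal a ha, Real.coe_toNNReal b hb,
    Real.coe_toNNReal _ (add_nonneg ha hb)] at h2

lemma phiF_superadd {α : ℝ} (hα : 0 < α) {a b : ℝ} (ha : 0 ≤ a) (hb : 0 ≤ b) :
    phiF α a + phiF α b ≤ phiF α (a + b) := by
  unfold phiF
  split
  · -- α = 1 : a log a + b log b ≤ (a+b) log (a+b)
    have h1 : a * Real.log a ≤ a * Real.log (a + b) := by
      rcases ha.eq_or_lt with h | h
      · simp [← h]
      · exact mul_le_mul_of_nonneg_left
          (Real.log_le_log h (le_add_of_nonneg_right hb)) ha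
    have h2 : b * Real.log b ≤ b * Real.log (a + b) := by
      rcases hb.eq_or_lt with h | h
      · simp [← h]
      · exact mul_le_mul_of_nonneg_left
          (Real.log_le_log h (le_add_of_nonneg_left ha)) hb
    calc a * Real.log a + b * Real.log b
        ≤ a * Real.log (a + b) + b * Real.log (a + b) := add_le_add h1 h2
      _ = (a + b) * Real.log (a + b) := by ring
  · rename_i h1
    rcases lt_or_gt_of_ne h1 with hlt | hgt
    · -- α < 1 : (α-1)⁻¹ < 0, (a+b)^α ≤ a^α + b^α
      have hneg : (α - 1)⁻¹ < 0 := inv_lt_zero.2 (by linarith)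
      have := real_rpow_add_le hα.le hlt.le ha hb
      nlinarith [this]
    · have hpos : 0 < (α - 1)⁻¹ := inv_pos.2 (by linarith)
      have := real_add_rpow_le hgt.le ha hb
      nlinarith [this]

lemma sum_phiF_le {α : ℝ} (hα : 0 < α) {ι : Type} (s : Finset ι) (g : ι → ℝ)
    (hg : ∀ i ∈ s, 0 ≤ g i) :
    ∑ i ∈ s, phiF α (g i) ≤ phiF α (∑ i ∈ s, g i) := by
  induction s using Finset.cons_induction with
  | empty => simp [phiF_zero hα.ne']
  | cons i s hi ih =>
    rw [Finset.sum_cons, Finset.sum_cons]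
    have hgs : 0 ≤ ∑ j ∈ s, g j :=
      Finset.sum_nonneg fun j hj => hg j (Finset.mem_cons_of_mem hj)
    calc phiF α (g i) + ∑ j ∈ s, phiF α (g j)
        ≤ phiF α (g i) + phiF α (∑ j ∈ s, g j) := by
          have := ih (fun j hj => hg j (Finset.mem_cons_of_mem hj))
          linarith
      _ ≤ phiF α (g i + ∑ j ∈ s, g j) :=
          phiF_superadd hα (hg i (Finset.mem_cons_self i s)) hgs

lemma sum_phiF_le_of_isMP {α : ℝ} (hα : 0 < α) {X Y : Type} [Fintype X] [Fintype Y]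
    {p : X → ℝ} {q : Y → ℝ} {f : X → Y} (hp : IsMeas p) (hmp : IsMP p q f) :
    ∑ i, phiF α (p i) ≤ ∑ j, phiF α (q j) := by
  have hq : ∀ j, q j = ∑ i ∈ Finset.univ.filter (fun i => f i = j), p i := by
    intro j; rw [hmp j, Finset.sum_filter]
  calc ∑ i, phiF α (p i)
      = ∑ j, ∑ i ∈ Finset.univ.filter (fun i => f i = j), phiF α (p i) :=
        (Finset.sum_fiberwise_of_maps_to (fun i _ => Finset.mem_univ (f i)) _).symm
    _ ≤ ∑ j, phiF α (q j) := by
        refine Finset.sum_le_sum fun j _ => ?_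
        rw [hq j]
        exact sum_phiF_le hα _ _ fun i _ => hp i



lemma phiF_mul {α : ℝ} (hα : 0 < α) {lam t : ℝ} (hl : 0 ≤ lam) (ht : 0 ≤ t) :
    phiF α (lam * t) = lam ^ α * phiF α t + (if α = 1 then lam * Real.log lam else 0) * t := by
  unfold phiF
  split
  · rename_i h1
    subst h1
    rw [Real.rpow_one]
    rcases hl.eq_or_lt with h | h
    · simp [← h]
    rcases ht.eq_or_lt with h2 | h2
    · simp [← h2]
    rw [Real.log_mul h.ne' h2.ne']
    ring
  · rw [Real.mul_rpow hl ht]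
    ring

lemma tsallisExt_smul {α : ℝ} (hα : 0 < α) {X : Type} [Fintype X] {p : X → ℝ}
    (hp : IsMeas p) {lam : ℝ} (hl : 0 ≤ lam) :
    tsallisExt α (fun i => lam * p i) = lam ^ α * tsallisExt α p := by
  have hp' : IsMeas (fun i => lam * p i) := fun i => mul_nonneg hl (hp i)
  rw [tsallisExt_eq_phiF α hα _ hp', tsallisExt_eq_phiF α hα _ hp]
  have hsum : ∑ i, lam * p i = lam * ∑ i, p i := by rw [Finset.mul_sum]
  rw [hsum, phiF_mul hα hl (Finset.sum_nonneg fun i _ => hp i)]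
  have hterm : ∀ i : X, phiF α (lam * p i)
      = lam ^ α * phiF α (p i) + (if α = 1 then lam * Real.log lam else 0) * p i :=
    fun i => phiF_mul hα hl (hp i)
  rw [Finset.sum_congr rfl fun i _ => hterm i, Finset.sum_add_distrib,
    ← Finset.mul_sum, ← Finset.mul_sum]
  ring

lemma isMeas_dsum {X Y : Type} [Fintype X] [Fintype Y] {p : X → ℝ} {q : Y → ℝ}
    (hp : IsMeas p) (hq : IsMeas q) : IsMeas (dsum p q) := by
  intro i
  cases i with
  | inl x => exact hp x
  | inr y => exact hq y

lemma sum_dsum {X Y : Type} [Fintype X] [Fintype Y] (p : X → ℝ) (q : Y → ℝ) :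
    ∑ i, dsum p q i = (∑ x, p x) + ∑ y, q y := by
  rw [Fintype.sum_sum_type]
  rfl

lemma sum_comp_dsum {X Y : Type} [Fintype X] [Fintype Y] (p : X → ℝ) (q : Y → ℝ) (g : ℝ → ℝ) :
    ∑ i, g (dsum p q i) = (∑ x, g (p x)) + ∑ y, g (q y) := by
  rw [Fintype.sum_sum_type]
  rfl

lemma tsallisExt_dsum {α : ℝ} (hα : 0 < α) {X Y : Type} [Fintype X] [Fintype Y]
    {p : X → ℝ} {q : Y → ℝ} (hp : IsMeas p) (hq : IsMeas q) :
    tsallisExt α (dsum p q)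
      = phiF α ((∑ x, p x) + ∑ y, q y) - (∑ x, phiF α (p x)) - ∑ y, phiF α (q y) := by
  rw [tsallisExt_eq_phiF α hα _ (isMeas_dsum hp hq), sum_dsum, sum_comp_dsum]
  ring

lemma tsallisConds_const (α : ℝ) (hα : 0 < α) (c : ℝ) (hc : 0 ≤ c) :
    TsallisConds α (fun {X Y : Type} [Fintype X] [Fintype Y]
      (p : X → ℝ) (q : Y → ℝ) (_ : X → Y) =>
      c * (tsallisExt α p - tsallisExt α q)) := by
  refine ⟨?_, ?_, ?_, ?_, ?_⟩
  · -- nonnegativity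
    intro X Y _ _ p q f hp hq hmp
    have h1 := tsallisExt_eq_phiF α hα p hp
    have h2 := tsallisExt_eq_phiF α hα q hq
    have h3 := sum_eq_of_isMP hmp
    have h4 := sum_phiF_le_of_isMP hα hp hmp
    have : 0 ≤ tsallisExt α p - tsallisExt α q := by rw [h1, h2, h3]; linarith
    exact mul_nonneg hc this
  · -- functoriality
    intro X Y Z _ _ _ p q r g f _ _ _ _ _
    ring
  · -- additivity
    intro X X' Y Y' _ _ _ _ p p' q q' f g hp hp' hq hq' hf hg
    dsimp only
    rw [tsallisExt_dsum hα hp hq, tsallisExt_dsum hα hp' hq',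
      sum_eq_of_isMP hf, sum_eq_of_isMP hg,
      tsallisExt_eq_phiF α hα p hp, tsallisExt_eq_phiF α hα p' hp',
      tsallisExt_eq_phiF α hα q hq, tsallisExt_eq_phiF α hα q' hq',
      sum_eq_of_isMP hf, sum_eq_of_isMP hg]
    ring
  · -- homogeneity
    intro X Y _ _ p q f lam hl hp hq _
    dsimp only
    rw [tsallisExt_smul hα hp hl, tsallisExt_smul hα hq hl]
    ring
  · -- continuity
    intro X Y _ _ pn qn fn p q f hpn hqn hmpn hp hq hmp _ hptend hqtend
    have key : ∀ {Z : Type} [Fintype Z] (rn : ℕ → Z → ℝ) (r : Z → ℝ),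
        (∀ n, IsMeas (rn n)) → IsMeas r →
        (∀ j, Tendsto (fun n => rn n j) atTop (𝓝 (r j))) →
        Tendsto (fun n => tsallisExt α (rn n)) atTop (𝓝 (tsallisExt α r)) := by
      intro Z _ rn r hrn hr hrt
      have h1 : Tendsto (fun n => ∑ j, rn n j) atTop (𝓝 (∑ j, r j)) :=
        tendsto_finset_sum _ fun j _ => hrt j
      have h2 : Tendsto (fun n => phiF α (∑ j, rn n j)) atTop (𝓝 (phiF α (∑ j, r j))) :=
        ((phiF_continuous hα).continuousAt.tendsto).comp h1
      have h3 : Tendsto (fun n => ∑ j, phiF α (rn n j)) atTop (𝓝 (∑ j, phiF α (r j))) :=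
        tendsto_finset_sum _ fun j _ =>
          ((phiF_continuous hα).continuousAt.tendsto).comp (hrt j)
      have h4 := h2.sub h3
      have he : ∀ n, tsallisExt α (rn n)
          = phiF α (∑ j, rn n j) - ∑ j, phiF α (rn n j) :=
        fun n => tsallisExt_eq_phiF α hα _ (hrn n)
      rw [tsallisExt_eq_phiF α hα _ hr]
      exact h4.congr fun n => (he n).symm
    exact ((key pn p hpn hp hptend).sub (key qn q hqn hq hqtend)).const_mul c


section ForwardAux

lemma sum_punit (a : ℝ) : (∑ _i : PUnit, a) = a := by simp

lemma isMP_id {X : Type} [Fintype X] (p : X → ℝ) : IsMP p p id := by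
  intro j
  simp [IsMP]

lemma isMP_terminal {X : Type} [Fintype X] (p : X → ℝ) :
    IsMP p (fun _ : PUnit => ∑ i, p i) (fun _ => PUnit.unit) := by
  intro j
  simp

lemma isMP_equiv {X Y : Type} [Fintype X] [Fintype Y] (e : X ≃ Y) (p : X → ℝ) :
    IsMP p (fun j => p (e.symm j)) e := by
  intro j
  simp [Equiv.apply_eq_iff_eq_symm_apply]

lemma isMP_equiv_symm {X Y : Type} [Fintype X] [Fintype Y] (e : X ≃ Y) (p : X → ℝ) :
    IsMP (fun j => p (e.symm j)) p e.symm := by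
  intro i
  have : ∀ j : Y, (e.symm j = i) = (j = e i) := by
    intro j
    simp [Equiv.symm_apply_eq]
  simp only [this]
  simp

lemma isMP_sumMap {X X' Y Y' : Type} [Fintype X] [Fintype X'] [Fintype Y] [Fintype Y']
    {p : X → ℝ} {p' : X' → ℝ} {q : Y → ℝ} {q' : Y' → ℝ} {f : X → X'} {g : Y → Y'}
    (hf : IsMP p p' f) (hg : IsMP q q' g) :
    IsMP (dsum p q) (dsum p' q') (Sum.map f g) := by
  intro j
  cases j with
  | inl x' =>
    have : dsum p' q' (Sum.inl x') = p' x' := rfl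
    rw [this, hf x', Fintype.sum_sum_type]
    simp [dsum]
  | inr y' =>
    have : dsum p' q' (Sum.inr y') = q' y' := rfl
    rw [this, hg y', Fintype.sum_sum_type]
    simp [dsum]

lemma isMP_fold (a b : ℝ) :
    IsMP (dsum (fun _ : PUnit => a) (fun _ : PUnit => b)) (fun _ : PUnit => a + b)
      (fun _ => PUnit.unit) := by
  intro j
  rw [Fintype.sum_sum_type]
  simp [dsum]

variable {F : ∀ {X Y : Type} [Fintype X] [Fintype Y], (X → ℝ) → (Y → ℝ) → (X → Y) → ℝ}

/-- The "entropy" associated to `F`: the value of `F` on the terminal map. -/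
noncomputable def Kf (F : ∀ {X Y : Type} [Fintype X] [Fintype Y],
    (X → ℝ) → (Y → ℝ) → (X → Y) → ℝ) {X : Type} [Fintype X] (p : X → ℝ) : ℝ :=
  F p (fun _ : PUnit => ∑ i, p i) (fun _ => PUnit.unit)

/-- The value of `F` on the two-point space. -/
noncomputable def kap (F : ∀ {X Y : Type} [Fintype X] [Fintype Y],
    (X → ℝ) → (Y → ℝ) → (X → Y) → ℝ) (a b : ℝ) : ℝ :=
  F (dsum (fun _ : PUnit => a) (fun _ : PUnit => b)) (fun _ : PUnit => a + b)
    (fun _ => PUnit.unit)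

variable {α : ℝ}

lemma F_id_zero (hF : TsallisConds α F) {X : Type} [Fintype X] (p : X → ℝ)
    (hp : IsMeas p) : F p p id = 0 := by
  have h := hF.2.1 p p p id id hp hp hp (isMP_id p) (isMP_id p)
  have hii : (id ∘ id : X → X) = id := rfl
  rw [hii] at h
  linarith

lemma F_equiv_zero (hF : TsallisConds α F) {X Y : Type} [Fintype X] [Fintype Y]
    (e : X ≃ Y) (p : X → ℝ) (hp : IsMeas p) :
    F p (fun j => p (e.symm j)) ⇑e = 0 := by
  set q : Y → ℝ := fun j => p (e.symm j) with hqdef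
  have hq : IsMeas q := fun j => hp _
  have h := hF.2.1 p q p ⇑e ⇑e.symm hp hq hp (isMP_equiv e p) (isMP_equiv_symm e p)
  beta_reduce at h
  rw [Equiv.symm_comp_self, F_id_zero hF p hp] at h
  have h1 := hF.1 p q ⇑e hp hq (isMP_equiv e p)
  have h2 := hF.1 q p ⇑e.symm hq hp (isMP_equiv_symm e p)
  beta_reduce at h1 h2
  linarith

lemma K_equiv (hF : TsallisConds α F) {X Y : Type} [Fintype X] [Fintype Y]
    (e : X ≃ Y) (p : X → ℝ) (hp : IsMeas p) :
    Kf F p = Kf F (fun j => p (e.symm j)) := by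
  set q : Y → ℝ := fun j => p (e.symm j) with hqdef
  have hq : IsMeas q := fun j => hp _
  have h := hF.2.1 p q (fun _ : PUnit => ∑ j, q j) ⇑e (fun _ => PUnit.unit)
    hp hq (fun _ => Finset.sum_nonneg fun j _ => hq j) (isMP_equiv e p)
    (isMP_terminal q)
  beta_reduce at h
  have hcomp : ((fun _ => PUnit.unit) ∘ ⇑e : X → PUnit) = fun _ => PUnit.unit := rfl
  rw [F_equiv_zero hF e p hp, add_zero, hcomp] at h
  have hsum : (fun _ : PUnit => ∑ j, q j) = (fun _ : PUnit => ∑ i, p i) := by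
    funext
    exact Equiv.sum_comp e.symm p
  unfold Kf
  beta_reduce
  rw [← hsum]
  exact h

lemma K_unique (hF : TsallisConds α F) {X : Type} [Fintype X] [Unique X] (p : X → ℝ)
    (hp : IsMeas p) : Kf F p = 0 := by
  have e : X ≃ PUnit := Equiv.equivPUnit X
  have h0 := F_equiv_zero hF e p hp
  have h1 : ⇑e = (fun _ : X => PUnit.unit) := funext fun x => Subsingleton.elim _ _
  have h2 : (fun j : PUnit => p (e.symm j)) = (fun _ : PUnit => ∑ i, p i) := by
    funext j
    rw [Finset.univ_unique, Finset.sum_singleton]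
    congr 1
    exact Subsingleton.elim _ _
  rw [h1, h2] at h0
  exact h0

lemma K_of_isMP (hF : TsallisConds α F) {X Y : Type} [Fintype X] [Fintype Y]
    {p : X → ℝ} {q : Y → ℝ} {f : X → Y} (hp : IsMeas p) (hq : IsMeas q)
    (hmp : IsMP p q f) : F p q f = Kf F p - Kf F q := by
  have h := hF.2.1 p q (fun _ : PUnit => ∑ j, q j) f (fun _ => PUnit.unit)
    hp hq (fun _ => Finset.sum_nonneg fun j _ => hq j) hmp (isMP_terminal q)
  beta_reduce at h
  have hcomp : ((fun _ => PUnit.unit) ∘ f : X → PUnit) = fun _ => PUnit.unit := rfl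
  have hsum : (fun _ : PUnit => ∑ j, q j) = (fun _ : PUnit => ∑ i, p i) := by
    funext
    exact sum_eq_of_isMP hmp
  rw [hcomp] at h
  have h2 : Kf F p = F p (fun _ : PUnit => ∑ j, q j) (fun _ => PUnit.unit) := by
    unfold Kf
    beta_reduce
    rw [hsum]
  have h3 : Kf F q = F q (fun _ : PUnit => ∑ j, q j) (fun _ => PUnit.unit) := rfl
  rw [h2, h3]
  linarith

lemma kap_eq_K (a b : ℝ) :
    kap F a b = Kf F (dsum (fun _ : PUnit => a) (fun _ : PUnit => b)) := by
  have hm : (fun _ : PUnit => ∑ i, dsum (fun _ : PUnit => a) (fun _ : PUnit => b) i)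
      = (fun _ : PUnit => a + b) := by
    funext
    rw [sum_dsum, sum_punit, sum_punit]
  unfold kap Kf
  beta_reduce
  rw [hm]

lemma K_dsum (hF : TsallisConds α F) {X Y : Type} [Fintype X] [Fintype Y]
    (p : X → ℝ) (q : Y → ℝ) (hp : IsMeas p) (hq : IsMeas q) :
    Kf F (dsum p q) = Kf F p + Kf F q + kap F (∑ i, p i) (∑ j, q j) := by
  have hpq : IsMeas (dsum p q) := isMeas_dsum hp hq
  set mid : PUnit ⊕ PUnit → ℝ := dsum (fun _ : PUnit => ∑ i, p i) (fun _ : PUnit => ∑ j, q j)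
    with hmid
  have hmidm : IsMeas mid :=
    isMeas_dsum (fun _ => Finset.sum_nonneg fun i _ => hp i)
      (fun _ => Finset.sum_nonneg fun j _ => hq j)
  have hmp1 : IsMP (dsum p q) mid (Sum.map (fun _ => PUnit.unit) (fun _ => PUnit.unit)) :=
    isMP_sumMap (isMP_terminal p) (isMP_terminal q)
  have hmp2 : IsMP mid (fun _ : PUnit => (∑ i, p i) + ∑ j, q j) (fun _ => PUnit.unit) :=
    isMP_fold _ _
  have h := hF.2.1 (dsum p q) mid (fun _ : PUnit => (∑ i, p i) + ∑ j, q j)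
    (Sum.map (fun _ => PUnit.unit) (fun _ => PUnit.unit)) (fun _ => PUnit.unit)
    hpq hmidm (fun _ => add_nonneg (Finset.sum_nonneg fun i _ => hp i)
      (Finset.sum_nonneg fun j _ => hq j)) hmp1 hmp2
  have hsplit := hF.2.2.1 p (fun _ : PUnit => ∑ i, p i) q (fun _ : PUnit => ∑ j, q j)
    (fun _ => PUnit.unit) (fun _ => PUnit.unit) hp
    (fun _ => Finset.sum_nonneg fun i _ => hp i) hq
    (fun _ => Finset.sum_nonneg fun j _ => hq j) (isMP_terminal p) (isMP_terminal q)
  have hcomp : ((fun _ => PUnit.unit) ∘ Sum.map (fun _ => PUnit.unit) (fun _ => PUnit.unit)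
      : X ⊕ Y → PUnit) = fun _ => PUnit.unit := by
    funext i
    cases i <;> rfl
  beta_reduce at h hsplit
  rw [hcomp, hsplit] at h
  have hm : (fun _ : PUnit => ∑ i, dsum p q i)
      = (fun _ : PUnit => (∑ i, p i) + ∑ j, q j) := by
    funext
    rw [sum_dsum]
  have e1 : Kf F (dsum p q)
      = F (dsum p q) (fun _ : PUnit => (∑ i, p i) + ∑ j, q j) (fun _ => PUnit.unit) := by
    unfold Kf
    beta_reduce
    rw [hm]
  have e2 : kap F (∑ i, p i) (∑ j, q j)
      = F mid (fun _ : PUnit => (∑ i, p i) + ∑ j, q j) (fun _ => PUnit.unit) := by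
    unfold kap
    beta_reduce
    rw [hmid]
  have e3 : Kf F p = F p (fun _ : PUnit => ∑ i, p i) (fun _ => PUnit.unit) := rfl
  have e4 : Kf F q = F q (fun _ : PUnit => ∑ j, q j) (fun _ => PUnit.unit) := rfl
  rw [e1, e2, e3, e4]
  linarith

lemma kap_nonneg (hF : TsallisConds α F) {a b : ℝ} (ha : 0 ≤ a) (hb : 0 ≤ b) :
    0 ≤ kap F a b :=
  hF.1 _ _ _ (isMeas_dsum (fun _ => ha) (fun _ => hb)) (fun _ => add_nonneg ha hb)
    (isMP_fold a b)

lemma kap_symm (hF : TsallisConds α F) {a b : ℝ} (ha : 0 ≤ a) (hb : 0 ≤ b) :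
    kap F a b = kap F b a := by
  rw [kap_eq_K a b, kap_eq_K b a]
  have h := K_equiv hF (Equiv.sumComm PUnit PUnit)
    (dsum (fun _ : PUnit => a) (fun _ : PUnit => b))
    (isMeas_dsum (fun _ => ha) (fun _ => hb))
  have h2 : (fun j => dsum (fun _ : PUnit => a) (fun _ : PUnit => b)
      ((Equiv.sumComm PUnit PUnit).symm j)) = dsum (fun _ : PUnit => b) (fun _ : PUnit => a) := by
    funext j
    cases j <;> rfl
  rw [h2] at h
  exact h

lemma kap_zero (hF : TsallisConds α F) {a : ℝ} (ha : 0 ≤ a) : kap F a 0 = 0 := by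
  have hinc : IsMP (fun _ : PUnit => a)
      (dsum (fun _ : PUnit => a) (fun _ : PUnit => (0:ℝ))) Sum.inl := by
    intro j
    cases j with
    | inl u => simp [dsum]
    | inr u => simp [dsum]
  have hca : IsMeas (fun _ : PUnit => a) := fun _ => ha
  have hd : IsMeas (dsum (fun _ : PUnit => a) (fun _ : PUnit => (0:ℝ))) :=
    isMeas_dsum (fun _ => ha) (fun _ => le_refl 0)
  have hq : IsMeas (fun _ : PUnit => a + 0) := fun _ => by simpa using ha
  have h := hF.2.1 (fun _ : PUnit => a)
    (dsum (fun _ : PUnit => a) (fun _ : PUnit => (0:ℝ)))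
    (fun _ : PUnit => a + 0) Sum.inl (fun _ => PUnit.unit)
    hca hd hq hinc (isMP_fold a 0)
  beta_reduce at h
  have hcomp : ((fun _ => PUnit.unit) ∘ (Sum.inl : PUnit → PUnit ⊕ PUnit)) =
      (fun _ : PUnit => PUnit.unit) := rfl
  rw [hcomp] at h
  have hL : F (fun _ : PUnit => a) (fun _ : PUnit => a + 0) (fun _ => PUnit.unit) = 0 := by
    have hm : (fun _ : PUnit => a + 0) = (fun _ : PUnit => ∑ _i : PUnit, a) := by
      funext
      rw [sum_punit, add_zero]
    rw [hm]
    exact K_unique hF (fun _ : PUnit => a) hca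
  rw [hL] at h
  have h1 : 0 ≤ kap F a 0 := kap_nonneg hF ha (le_refl 0)
  have h2 : 0 ≤ F (fun _ : PUnit => a)
      (dsum (fun _ : PUnit => a) (fun _ : PUnit => (0:ℝ))) Sum.inl :=
    hF.1 _ _ _ hca hd hinc
  have h3 : kap F a 0 = F (dsum (fun _ : PUnit => a) (fun _ : PUnit => (0:ℝ)))
      (fun _ : PUnit => a + 0) (fun _ => PUnit.unit) := rfl
  rw [h3]
  linarith

lemma kap_hom (hF : TsallisConds α F) {l a b : ℝ} (hl : 0 ≤ l) (ha : 0 ≤ a) (hb : 0 ≤ b) :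
    kap F (l * a) (l * b) = l ^ α * kap F a b := by
  have h := hF.2.2.2.1 (dsum (fun _ : PUnit => a) (fun _ : PUnit => b))
    (fun _ : PUnit => a + b) (fun _ => PUnit.unit) l hl
    (isMeas_dsum (fun _ => ha) (fun _ => hb)) (fun _ => add_nonneg ha hb) (isMP_fold a b)
  beta_reduce at h
  have h1 : (fun i => l * dsum (fun _ : PUnit => a) (fun _ : PUnit => b) i)
      = dsum (fun _ : PUnit => l * a) (fun _ : PUnit => l * b) := by
    funext i
    cases i <;> rfl
  have h2 : (fun _ : PUnit => l * (a + b)) = (fun _ : PUnit => l * a + l * b) := by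
    funext
    ring
  rw [h1, h2] at h
  exact h

lemma kap_cocycle (hF : TsallisConds α F) {a b c : ℝ} (ha : 0 ≤ a) (hb : 0 ≤ b)
    (hc : 0 ≤ c) :
    kap F a b + kap F (a + b) c = kap F b c + kap F a (b + c) := by
  set ca : PUnit → ℝ := fun _ => a with hca
  set cb : PUnit → ℝ := fun _ => b with hcb
  set cc : PUnit → ℝ := fun _ => c with hcc
  have hma : IsMeas ca := fun _ => ha
  have hmb : IsMeas cb := fun _ => hb
  have hmc : IsMeas cc := fun _ => hc
  have hmbc : IsMeas (dsum cb cc) := isMeas_dsum hmb hmc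
  have hmab : IsMeas (dsum ca cb) := isMeas_dsum hma hmb
  -- left association
  have h1 := K_dsum hF ca (dsum cb cc) hma hmbc
  rw [K_unique hF ca hma, K_dsum hF cb cc hmb hmc,
    K_unique hF cb hmb, K_unique hF cc hmc] at h1
  rw [show (∑ i, ca i) = a from sum_punit a, show (∑ i, cb i) = b from sum_punit b,
    show (∑ i, cc i) = c from sum_punit c] at h1
  rw [show (∑ j, dsum cb cc j) = b + c by rw [sum_dsum]; rw [sum_punit, sum_punit]] at h1
  -- right association
  have h2 := K_dsum hF (dsum ca cb) cc hmab hmc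
  rw [K_unique hF cc hmc, K_dsum hF ca cb hma hmb,
    K_unique hF ca hma, K_unique hF cb hmb] at h2
  rw [show (∑ i, ca i) = a from sum_punit a, show (∑ i, cb i) = b from sum_punit b,
    show (∑ i, cc i) = c from sum_punit c] at h2
  rw [show (∑ i, dsum ca cb i) = a + b by rw [sum_dsum]; rw [sum_punit, sum_punit]] at h2
  -- the two spaces are isomorphic
  have h3 := K_equiv hF (Equiv.sumAssoc PUnit PUnit PUnit) (dsum (dsum ca cb) cc) 
    (isMeas_dsum hmab hmc)
  have h4 : (fun j => dsum (dsum ca cb) cc ((Equiv.sumAssoc PUnit PUnit PUnit).symm j))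
      = dsum ca (dsum cb cc) := by
    funext j
    rcases j with u | (u | u) <;> rfl
  rw [h4] at h3
  rw [h3, h1] at h2
  linarith

lemma kap_cont (hF : TsallisConds α F) :
    Continuous fun u : ℝ × ℝ => kap F (max u.1 0) (max u.2 0) := by
  refine SeqContinuous.continuous ?_
  intro x u hx
  have t1 : Tendsto (fun n => max (x n).1 0) atTop (𝓝 (max u.1 0)) :=
    ((continuous_fst.max continuous_const).tendsto u).comp hx
  have t2 : Tendsto (fun n => max (x n).2 0) atTop (𝓝 (max u.2 0)) :=
    ((continuous_snd.max continuous_const).tendsto u).comp hx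
  have h := hF.2.2.2.2
    (fun n => dsum (fun _ : PUnit => max (x n).1 0) (fun _ : PUnit => max (x n).2 0))
    (fun n => fun _ : PUnit => max (x n).1 0 + max (x n).2 0)
    (fun n => fun _ => PUnit.unit)
    (dsum (fun _ : PUnit => max u.1 0) (fun _ : PUnit => max u.2 0))
    (fun _ : PUnit => max u.1 0 + max u.2 0)
    (fun _ => PUnit.unit)
    (fun n => isMeas_dsum (fun _ => le_max_right _ 0) (fun _ => le_max_right _ 0))
    (fun n _ => add_nonneg (le_max_right _ 0) (le_max_right _ 0))
    (fun n => isMP_fold _ _)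
    (isMeas_dsum (fun _ => le_max_right _ 0) (fun _ => le_max_right _ 0))
    (fun _ => add_nonneg (le_max_right _ 0) (le_max_right _ 0))
    (isMP_fold _ _)
    (Filter.Eventually.of_forall fun n => rfl)
    (fun i => by
      cases i with
      | inl u' => exact t1
      | inr u' => exact t2)
    (fun j => t1.add t2)
  exact h

lemma sum_punit' (f : PUnit → ℝ) : (∑ y : PUnit, f y) = f PUnit.unit := by
  rw [Finset.univ_unique, Finset.sum_singleton]

lemma K_formula (hF : TsallisConds α F) (hα : 0 < α) {c : ℝ}
    (hkap : ∀ a b : ℝ, 0 ≤ a → 0 ≤ b →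
      kap F a b = c * (phiF α (a + b) - phiF α a - phiF α b)) :
    ∀ (n : ℕ) (X : Type) [Fintype X], Fintype.card X = n → ∀ (p : X → ℝ), IsMeas p →
      Kf F p = c * (phiF α (∑ i, p i) - ∑ i, phiF α (p i)) := by
  intro n
  induction n with
  | zero =>
    intro X _ hcard p hp
    have hempty : IsEmpty X := Fintype.card_eq_zero_iff.mp hcard
    have hps : (∑ i, p i) = 0 := by
      rw [Finset.univ_eq_empty, Finset.sum_empty]
    have hp0 : p = fun i => (0:ℝ) * p i := funext fun i => hempty.elim i
    have h := hF.2.2.2.1 p (fun _ : PUnit => ∑ i, p i) (fun _ => PUnit.unit) 0 le_rfl hp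
      (fun _ => Finset.sum_nonneg fun i _ => hp i) (isMP_terminal p)
    beta_reduce at h
    have hm1 : (fun i => (0:ℝ) * p i) = p := hp0.symm
    have hm2 : (fun _ : PUnit => (0:ℝ) * (∑ i, p i)) = (fun _ : PUnit => ∑ i, p i) := by
      funext
      rw [hps]
      ring
    rw [hm1, hm2, Real.zero_rpow hα.ne'] at h
    have hK : Kf F p = 0 := by
      have : Kf F p = F p (fun _ : PUnit => ∑ i, p i) (fun _ => PUnit.unit) := rfl
      rw [this, h]
      ring
    rw [hK, hps]
    rw [Finset.univ_eq_empty, Finset.sum_empty, phiF_zero hα.ne']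
    ring
  | succ n ih =>
    intro X _ hcard p hp
    have e : X ≃ (Fin n) ⊕ PUnit := Fintype.equivOfCardEq (by
      rw [hcard]
      simp)
    set q : (Fin n) ⊕ PUnit → ℝ := fun j => p (e.symm j) with hqdef
    have hq : IsMeas q := fun j => hp _
    have h1 : Kf F p = Kf F q := K_equiv hF e p hp
    set q1 : Fin n → ℝ := fun x => q (Sum.inl x) with hq1def
    set q2 : PUnit → ℝ := fun y => q (Sum.inr y) with hq2def
    have hq1 : IsMeas q1 := fun x => hq _
    have hq2 : IsMeas q2 := fun y => hq _
    have hq12 : q = dsum q1 q2 := by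
      funext j
      cases j <;> rfl
    have h2 : Kf F q = Kf F q1 + Kf F q2 + kap F (∑ x, q1 x) (∑ y, q2 y) := by
      rw [hq12]
      exact K_dsum hF q1 q2 hq1 hq2
    have h3 : Kf F q2 = 0 := K_unique hF q2 hq2
    have h4 := ih (Fin n) (Fintype.card_fin n) q1 hq1
    have hs1 : 0 ≤ ∑ x, q1 x := Finset.sum_nonneg fun x _ => hq1 x
    have hs2 : 0 ≤ ∑ y, q2 y := Finset.sum_nonneg fun y _ => hq2 y
    have h5 := hkap _ _ hs1 hs2
    -- sums transfer
    have hsum : (∑ i, p i) = (∑ x, q1 x) + ∑ y, q2 y := by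
      rw [← Equiv.sum_comp e.symm p]
      rw [show (∑ j, p (e.symm j)) = ∑ j, q j from rfl, Fintype.sum_sum_type]
    have hsumphi : (∑ i, phiF α (p i)) = (∑ x, phiF α (q1 x)) + ∑ y, phiF α (q2 y) := by
      rw [← Equiv.sum_comp e.symm (fun i => phiF α (p i))]
      rw [show (∑ j, phiF α (p (e.symm j))) = ∑ j, phiF α (q j) from rfl,
        Fintype.sum_sum_type]
    have hb : (∑ y, q2 y) = q2 PUnit.unit := sum_punit' q2
    have hbphi : (∑ y, phiF α (q2 y)) = phiF α (q2 PUnit.unit) := sum_punit' _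
    rw [h1, h2, h3, h4, h5, hsum, hsumphi, hb, hbphi]
    ring

end ForwardAux

section CocycleAnalysis

lemma additive_on_nonneg_linear (f : ℝ → ℝ) (hf : Continuous f)
    (hadd : ∀ a b : ℝ, 0 ≤ a → 0 ≤ b → f (a + b) = f a + f b) :
    ∀ t : ℝ, 0 ≤ t → f t = t * f 1 := by
  have h0 : f 0 = 0 := by
    have := hadd 0 0 le_rfl le_rfl
    simp at this
    linarith
  have hnat : ∀ (n : ℕ) (t : ℝ), 0 ≤ t → f ((n : ℝ) * t) = (n : ℝ) * f t := by
    intro n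
    induction n with
    | zero => intro t ht; simpa using h0
    | succ n ih =>
      intro t ht
      have h1 : ((n : ℝ) + 1) * t = (n : ℝ) * t + t := by ring
      push_cast
      rw [h1, hadd ((n : ℝ) * t) t (by positivity) ht, ih t ht]
      ring
  have hrat : ∀ m n : ℕ, f ((m : ℝ) / ((n : ℝ) + 1)) = (m : ℝ) / ((n : ℝ) + 1) * f 1 := by
    intro m n
    have hpos : (0:ℝ) < (n : ℝ) + 1 := by positivity
    have h1 : f ((m : ℝ) * (1 / ((n : ℝ) + 1))) = (m : ℝ) * f (1 / ((n : ℝ) + 1)) :=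
      hnat m _ (by positivity)
    have h2 : f (((n : ℝ) + 1) * (1 / ((n : ℝ) + 1))) = ((n : ℝ) + 1) * f (1 / ((n : ℝ) + 1)) := by
      have := hnat (n + 1) (1 / ((n : ℝ) + 1)) (by positivity)
      push_cast at this
      exact this
    have h3 : ((n : ℝ) + 1) * (1 / ((n : ℝ) + 1)) = 1 := by field_simp
    rw [h3] at h2
    have h4 : f (1 / ((n : ℝ) + 1)) = f 1 / ((n : ℝ) + 1) := by
      field_simp at h2 ⊢
      linarith
    have h5 : (m : ℝ) / ((n : ℝ) + 1) = (m : ℝ) * (1 / ((n : ℝ) + 1)) := by ring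
    rw [h5, h1, h4]
    ring
  intro t ht
  set q : ℕ → ℝ := fun n => (⌈((n : ℝ) + 1) * t⌉₊ : ℝ) / ((n : ℝ) + 1) with hqdef
  have hq1 : ∀ n : ℕ, t ≤ q n := by
    intro n
    have hpos : (0:ℝ) < (n : ℝ) + 1 := by positivity
    have := Nat.le_ceil (((n : ℝ) + 1) * t)
    rw [hqdef]
    dsimp only
    rw [le_div_iff₀ hpos]
    linarith
  have hq2 : ∀ n : ℕ, q n ≤ t + 1 / ((n : ℝ) + 1) := by
    intro n
    have hpos : (0:ℝ) < (n : ℝ) + 1 := by positivity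
    have h := Nat.ceil_lt_add_one (by positivity : (0:ℝ) ≤ ((n : ℝ) + 1) * t)
    rw [hqdef]
    dsimp only
    rw [div_le_iff₀ hpos]
    have heq : (t + 1 / ((n : ℝ) + 1)) * ((n : ℝ) + 1) = ((n : ℝ) + 1) * t + 1 := by
      field_simp
    rw [heq]
    linarith
  have hlim : Tendsto (fun n : ℕ => t + 1 / ((n : ℝ) + 1)) atTop (𝓝 t) := by
    have h := tendsto_one_div_add_atTop_nhds_zero_nat (𝕜 := ℝ)
    have := tendsto_const_nhds (x := t) (f := atTop (α := ℕ)) |>.add h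
    simpa using this
  have hqt : Tendsto q atTop (𝓝 t) :=
    tendsto_of_tendsto_of_tendsto_of_le_of_le tendsto_const_nhds hlim hq1 hq2
  have hfq : ∀ n, f (q n) = q n * f 1 := fun n => hrat _ n
  have l1 : Tendsto (fun n => f (q n)) atTop (𝓝 (f t)) := (hf.tendsto t).comp hqt
  have l2 : Tendsto (fun n => f (q n)) atTop (𝓝 (t * f 1)) := by
    have := hqt.mul (tendsto_const_nhds (x := f 1))
    refine Tendsto.congr (fun n => (hfq n).symm) this
  exact tendsto_nhds_unique l1 l2

lemma additive_linear (f : ℝ → ℝ) (hf : Continuous f)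
    (hadd : ∀ a b : ℝ, f (a + b) = f a + f b) :
    ∀ t : ℝ, f t = t * f 1 := by
  have h0 : f 0 = 0 := by have := hadd 0 0; simp at this; linarith
  have hpos := additive_on_nonneg_linear f hf (fun a b _ _ => hadd a b)
  intro t
  rcases le_or_gt 0 t with ht | ht
  · exact hpos t ht
  · have h1 : f t + f (-t) = 0 := by
      have := hadd t (-t)
      simp at this
      linarith [h0, this]
    have h2 : f (-t) = -t * f 1 := hpos (-t) (by linarith)
    linarith [h1, h2]

end CocycleAnalysis

noncomputable def Gk (k : ℝ → ℝ → ℝ) (x : ℝ) : ℝ := ∫ s in (0:ℝ)..1, k x s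

noncomputable def Psik (k : ℝ → ℝ → ℝ) (x : ℝ) : ℝ := ∫ u in (0:ℝ)..x, k u 1

lemma cocycle_coboundary (k : ℝ → ℝ → ℝ)
    (hcont : Continuous fun u : ℝ × ℝ => k u.1 u.2)
    (hcoc : ∀ a b c : ℝ, 0 ≤ a → 0 ≤ b → 0 ≤ c →
      k a b + k (a + b) c = k b c + k a (b + c)) :
    ∃ Φ : ℝ → ℝ, Continuous Φ ∧ ∀ a b : ℝ, 0 ≤ a → 0 ≤ b →
      k a b = Φ (a + b) - Φ a - Φ b := by
  have hC1 : ∀ x : ℝ, Continuous fun s => k x s :=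
    fun x => hcont.comp (continuous_const.prodMk continuous_id)
  have hC2 : ∀ y : ℝ, Continuous fun x => k x y :=
    fun y => hcont.comp (continuous_id.prodMk continuous_const)
  have hGc : Continuous (Gk k) := by
    unfold Gk
    exact intervalIntegral.continuous_parametric_intervalIntegral_of_continuous' hcont 0 1
  have hPc : Continuous (Psik k) := by
    unfold Psik
    exact intervalIntegral.continuous_primitive
      (fun y z => (hC2 1).intervalIntegrable y z) 0
  refine ⟨fun x => Psik k x - Gk k x, hPc.sub hGc, ?_⟩
  intro a b ha hb
  -- Step A : k a b + Gk (a+b) = Gk b + ∫ s in 0..1, k a (b+s)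
  have hint1 : IntervalIntegrable (fun s => k (a + b) s) MeasureTheory.volume 0 1 :=
    (hC1 (a + b)).intervalIntegrable 0 1
  have hint2 : IntervalIntegrable (fun s => k b s) MeasureTheory.volume 0 1 :=
    (hC1 b).intervalIntegrable 0 1
  have hint3 : IntervalIntegrable (fun s => k a (b + s)) MeasureTheory.volume 0 1 :=
    ((hC1 a).comp (continuous_const.add continuous_id)).intervalIntegrable 0 1
  have stepA : k a b + Gk k (a + b) = Gk k b + ∫ s in (0:ℝ)..1, k a (b + s) := by
    have hcongr : (∫ s in (0:ℝ)..1, (k a b + k (a + b) s))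
        = ∫ s in (0:ℝ)..1, (k b s + k a (b + s)) := by
      apply intervalIntegral.integral_congr
      intro s hs
      rw [Set.uIcc_of_le (by norm_num : (0:ℝ) ≤ 1)] at hs
      exact hcoc a b s ha hb hs.1
    rw [intervalIntegral.integral_add intervalIntegrable_const hint1,
        intervalIntegral.integral_add hint2 hint3, intervalIntegral.integral_const] at hcongr
    simp only [sub_zero, one_smul] at hcongr
    unfold Gk
    linarith [hcongr]
  -- Step B : shift
  have stepB : (∫ s in (0:ℝ)..1, k a (b + s)) = ∫ u in b..(b + 1), k a u := by
    have h := intervalIntegral.integral_comp_add_left (a := (0:ℝ)) (b := (1:ℝ))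
      (fun u => k a u) b
    simpa using h
  -- adjacent interval identities
  have ii : ∀ y z : ℝ, IntervalIntegrable (fun u => k a u) MeasureTheory.volume y z :=
    fun y z => (hC1 a).intervalIntegrable y z
  have A1 : (∫ u in (0:ℝ)..b, k a u) + (∫ u in b..(b + 1), k a u)
      = ∫ u in (0:ℝ)..(b + 1), k a u :=
    intervalIntegral.integral_add_adjacent_intervals (ii 0 b) (ii b (b + 1))
  have A2 : (∫ u in (0:ℝ)..1, k a u) + (∫ u in (1:ℝ)..(b + 1), k a u)
      = ∫ u in (0:ℝ)..(b + 1), k a u :=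
    intervalIntegral.integral_add_adjacent_intervals (ii 0 1) (ii 1 (b + 1))
  have A3 : (∫ u in (0:ℝ)..b, k a (u + 1)) = ∫ u in (1:ℝ)..(b + 1), k a u := by
    have h := intervalIntegral.integral_comp_add_right (a := (0:ℝ)) (b := b)
      (fun u => k a u) 1
    simpa using h
  have hi4 : IntervalIntegrable (fun u => k a (u + 1)) MeasureTheory.volume 0 b :=
    ((hC1 a).comp (continuous_id.add continuous_const)).intervalIntegrable 0 b
  have hi5 : IntervalIntegrable (fun u => k (a + u) 1) MeasureTheory.volume 0 b :=
    ((hC2 1).comp (continuous_const.add continuous_id)).intervalIntegrable 0 b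
  have hi6 : IntervalIntegrable (fun u => k u 1) MeasureTheory.volume 0 b :=
    (hC2 1).intervalIntegrable 0 b
  have A4 : (∫ u in (0:ℝ)..b, (k a (u + 1) - k a u))
      = (∫ u in (0:ℝ)..b, k a (u + 1)) - ∫ u in (0:ℝ)..b, k a u :=
    intervalIntegral.integral_sub hi4 (ii 0 b)
  have A5 : (∫ u in (0:ℝ)..b, (k a (u + 1) - k a u))
      = ∫ u in (0:ℝ)..b, (k (a + u) 1 - k u 1) := by
    apply intervalIntegral.integral_congr
    intro u hu
    rw [Set.uIcc_of_le hb] at hu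
    have h := hcoc a u 1 ha hu.1 zero_le_one
    dsimp only
    linarith
  have A6 : (∫ u in (0:ℝ)..b, (k (a + u) 1 - k u 1))
      = (∫ u in (0:ℝ)..b, k (a + u) 1) - ∫ u in (0:ℝ)..b, k u 1 :=
    intervalIntegral.integral_sub hi5 hi6
  have A7 : (∫ u in (0:ℝ)..b, k (a + u) 1) = ∫ u in a..(a + b), k u 1 := by
    have h := intervalIntegral.integral_comp_add_left (a := (0:ℝ)) (b := b)
      (fun u => k u 1) a
    simpa using h
  have A8 : Psik k a + (∫ u in a..(a + b), k u 1) = Psik k (a + b) := by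
    unfold Psik
    exact intervalIntegral.integral_add_adjacent_intervals
      ((hC2 1).intervalIntegrable 0 a) ((hC2 1).intervalIntegrable a (a + b))
  have A9 : Gk k a = ∫ u in (0:ℝ)..1, k a u := rfl
  have A10 : Psik k b = ∫ u in (0:ℝ)..b, k u 1 := rfl
  have goal : k a b = (Psik k (a + b) - Gk k (a + b)) - (Psik k a - Gk k a)
      - (Psik k b - Gk k b) := by
    rw [stepB] at stepA
    linarith [stepA, A1, A2, A3, A4, A5, A6, A7, A8, A9.symm, A10.symm]
  exact goal

lemma rpow_two_ne_two {α : ℝ} (hα1 : α ≠ 1) : (2:ℝ) ^ α ≠ 2 := by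
  intro h
  rcases lt_trichotomy α 1 with hlt | heq | hgt
  · have : (2:ℝ) ^ α < (2:ℝ) ^ (1:ℝ) :=
      (Real.rpow_lt_rpow_left_iff (by norm_num : (1:ℝ) < 2)).2 hlt
    rw [Real.rpow_one] at this
    linarith
  · exact hα1 heq
  · have : (2:ℝ) ^ (1:ℝ) < (2:ℝ) ^ α :=
      (Real.rpow_lt_rpow_left_iff (by norm_num : (1:ℝ) < 2)).2 hgt
    rw [Real.rpow_one] at this
    linarith

lemma cocycle_solution {α : ℝ} (hα : 0 < α) (k : ℝ → ℝ → ℝ)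
    (hcont : Continuous fun u : ℝ × ℝ => k u.1 u.2)
    (hsym : ∀ a b : ℝ, 0 ≤ a → 0 ≤ b → k a b = k b a)
    (hcoc : ∀ a b c : ℝ, 0 ≤ a → 0 ≤ b → 0 ≤ c →
      k a b + k (a + b) c = k b c + k a (b + c))
    (hhom : ∀ l a b : ℝ, 0 ≤ l → 0 ≤ a → 0 ≤ b → k (l * a) (l * b) = l ^ α * k a b)
    (hzero : ∀ a : ℝ, 0 ≤ a → k a 0 = 0)
    (hnn : ∀ a b : ℝ, 0 ≤ a → 0 ≤ b → 0 ≤ k a b) :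
    ∃ c : ℝ, 0 ≤ c ∧ ∀ a b : ℝ, 0 ≤ a → 0 ≤ b →
      k a b = c * (phiF α (a + b) - phiF α a - phiF α b) := by
  obtain ⟨Φ, hΦc, hΦ⟩ := cocycle_coboundary k hcont hcoc
  have hrpowc : Continuous fun t : ℝ => t ^ α :=
    continuous_iff_continuousAt.2 fun x => Real.continuousAt_rpow_const x α (Or.inr hα.le)
  -- the scaling defect
  set c0 : ℝ → ℝ := fun l => Φ l - l ^ α * Φ 1 with hc0def
  have hc0c : Continuous c0 := hΦc.sub (hrpowc.mul continuous_const)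
  have hkey : ∀ l t : ℝ, 0 ≤ l → 0 ≤ t → Φ (l * t) = l ^ α * Φ t + c0 l * t := by
    intro l t hl ht
    have hadd : ∀ x y : ℝ, 0 ≤ x → 0 ≤ y →
        (fun s => Φ (l * s) - l ^ α * Φ s) (x + y)
          = (fun s => Φ (l * s) - l ^ α * Φ s) x + (fun s => Φ (l * s) - l ^ α * Φ s) y := by
      intro x y hx hy
      have h1 := hΦ (l * x) (l * y) (mul_nonneg hl hx) (mul_nonneg hl hy)
      have h2 := hΦ x y hx hy
      have h3 := hhom l x y hl hx hy
      dsimp only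
      have hlm : l * x + l * y = l * (x + y) := by ring
      rw [hlm] at h1
      rw [h2] at h3
      rw [h1] at h3
      linarith
    have hcψ : Continuous fun s => Φ (l * s) - l ^ α * Φ s :=
      (hΦc.comp (continuous_const.mul continuous_id)).sub (continuous_const.mul hΦc)
    have h := additive_on_nonneg_linear _ hcψ hadd t ht
    rw [mul_one] at h
    rw [hc0def]
    dsimp only
    linarith
  have hΦ1 : ∀ t : ℝ, 0 ≤ t → Φ t = t ^ α * Φ 1 + c0 t := by
    intro t ht
    have := hkey t 1 ht zero_le_one
    rw [mul_one, mul_one] at this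
    linarith
  have hmul : ∀ l m : ℝ, 0 ≤ l → 0 ≤ m → c0 (l * m) = l ^ α * c0 m + m * c0 l := by
    intro l m hl hm
    have h1 := hkey l m hl hm
    have h2 := hΦ1 m hm
    have h3 := hΦ1 (l * m) (mul_nonneg hl hm)
    rw [Real.mul_rpow hl hm] at h3
    rw [h2] at h1
    nlinarith [h1, h3]
  have hsymc : ∀ l m : ℝ, 0 ≤ l → 0 ≤ m → c0 m * (l ^ α - l) = c0 l * (m ^ α - m) := by
    intro l m hl hm
    have h1 := hmul l m hl hm
    have h2 := hmul m l hm hl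
    rw [mul_comm m l] at h2
    nlinarith [h1, h2]
  by_cases hα1 : α = 1
  · -- Shannon case
    subst hα1
    have hmul1 : ∀ l m : ℝ, 0 ≤ l → 0 ≤ m → c0 (l * m) = l * c0 m + m * c0 l := by
      intro l m hl hm
      have := hmul l m hl hm
      rwa [Real.rpow_one] at this
    set D : ℝ → ℝ := fun s => c0 (Real.exp s) / Real.exp s with hDdef
    have hDadd : ∀ s t : ℝ, D (s + t) = D s + D t := by
      intro s t
      have h := hmul1 (Real.exp s) (Real.exp t) (Real.exp_nonneg s) (Real.exp_nonneg t)
      rw [← Real.exp_add] at h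
      rw [hDdef]
      dsimp only
      rw [h, Real.exp_add]
      field_simp
      ring
    have hDc : Continuous D :=
      (hc0c.comp Real.continuous_exp).div Real.continuous_exp fun s => (Real.exp_pos s).ne'
    have hDlin := additive_linear D hDc hDadd
    set κc := D 1 with hκc
    have hc0l : ∀ l : ℝ, 0 < l → c0 l = κc * (l * Real.log l) := by
      intro l hl
      have h := hDlin (Real.log l)
      rw [hDdef] at h
      dsimp only at h
      rw [Real.exp_log hl] at h
      have : c0 l = Real.log l * D 1 * l := by
        field_simp at h
        linarith
      rw [this]
      ring
    refine ⟨κc, ?_, ?_⟩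
    · -- nonnegativity from k 1 1 ≥ 0
      have h11 := hΦ 1 1 zero_le_one zero_le_one
      have hΦ2 : Φ (1 + 1) = (2:ℝ) ^ (1:ℝ) * Φ 1 + c0 2 := by
        have := hΦ1 2 (by norm_num)
        norm_num at this ⊢
        convert this using 2
      have hc02 : c0 2 = κc * (2 * Real.log 2) := hc0l 2 (by norm_num)
      have hc01 : c0 1 = 0 := by
        rw [hc0def]
        dsimp only
        rw [Real.one_rpow]
        ring
      have hk11 : k 1 1 = κc * (2 * Real.log 2) := by
        rw [h11, hΦ2, hc02, Real.rpow_one]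
        ring
      have hlog2 : 0 < Real.log 2 := Real.log_pos (by norm_num)
      have hnn11 := hnn 1 1 zero_le_one zero_le_one
      rw [hk11] at hnn11
      nlinarith [hnn11, hlog2]
    · intro a b ha hb
      have hphi : ∀ t : ℝ, phiF 1 t = t * Real.log t := by
        intro t
        rw [phiF, if_pos rfl]
      rcases ha.eq_or_lt with h0a | h0a
      · have hk := hsym a b ha hb
        rw [← h0a] at hk ⊢
        rw [hk, hzero b hb, hphi, hphi, hphi]
        simp
      rcases hb.eq_or_lt with h0b | h0b
      · rw [← h0b, hzero a ha, hphi, hphi, hphi]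
        simp
      have hΦa : Φ a = a ^ (1:ℝ) * Φ 1 + κc * (a * Real.log a) := by
        rw [hΦ1 a ha, hc0l a h0a]
      have hΦb : Φ b = b ^ (1:ℝ) * Φ 1 + κc * (b * Real.log b) := by
        rw [hΦ1 b hb, hc0l b h0b]
      have hΦab : Φ (a + b) = (a + b) ^ (1:ℝ) * Φ 1 + κc * ((a + b) * Real.log (a + b)) := by
        rw [hΦ1 (a + b) (by linarith), hc0l (a + b) (by linarith)]
      rw [hΦ a b ha hb, hΦa, hΦb, hΦab, hphi, hphi, hphi,
        Real.rpow_one, Real.rpow_one, Real.rpow_one]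
      ring
  · -- Tsallis case α ≠ 1
    have h2 : (2:ℝ) ^ α ≠ 2 := rpow_two_ne_two hα1
    set A := c0 2 / ((2:ℝ) ^ α - 2) with hA
    have hc0l : ∀ m : ℝ, 0 ≤ m → c0 m = A * (m ^ α - m) := by
      intro m hm
      have h := hsymc 2 m (by norm_num) hm
      have hne : (2:ℝ) ^ α - 2 ≠ 0 := sub_ne_zero.2 h2
      rw [hA]
      field_simp
      linarith [h]
    have hΦt : ∀ t : ℝ, 0 ≤ t → Φ t = (Φ 1 + A) * t ^ α - A * t := by
      intro t ht
      rw [hΦ1 t ht, hc0l t ht]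
      ring
    set c := (α - 1) * (Φ 1 + A) with hc
    have hphi : ∀ t : ℝ, phiF α t = (α - 1)⁻¹ * t ^ α := by
      intro t
      rw [phiF, if_neg hα1]
    have hform : ∀ a b : ℝ, 0 ≤ a → 0 ≤ b →
        k a b = c * (phiF α (a + b) - phiF α a - phiF α b) := by
      intro a b ha hb
      have hne : α - 1 ≠ 0 := sub_ne_zero.2 hα1
      rw [hΦ a b ha hb, hΦt a ha, hΦt b hb, hΦt (a + b) (by linarith),
        hphi, hphi, hphi, hc]
      field_simp
      ring
    refine ⟨c, ?_, hform⟩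
    -- sign of c
    have hk11 := hform 1 1 zero_le_one zero_le_one
    have hphi1 : phiF α 1 = (α - 1)⁻¹ := by rw [hphi, Real.one_rpow, mul_one]
    have hphi2 : phiF α (1 + 1) = (α - 1)⁻¹ * (2:ℝ) ^ α := by
      rw [hphi]
      norm_num
    have hD : 0 < (α - 1)⁻¹ * ((2:ℝ) ^ α - 2) := by
      rcases lt_or_gt_of_ne hα1 with hlt | hgt
      · have h2lt : (2:ℝ) ^ α < 2 := by
          have : (2:ℝ) ^ α < (2:ℝ) ^ (1:ℝ) :=
            (Real.rpow_lt_rpow_left_iff (by norm_num : (1:ℝ) < 2)).2 hlt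
          rwa [Real.rpow_one] at this
        have hinv : (α - 1)⁻¹ < 0 := inv_lt_zero.2 (by linarith)
        nlinarith
      · have h2gt : 2 < (2:ℝ) ^ α := by
          have : (2:ℝ) ^ (1:ℝ) < (2:ℝ) ^ α :=
            (Real.rpow_lt_rpow_left_iff (by norm_num : (1:ℝ) < 2)).2 hgt
          rwa [Real.rpow_one] at this
        have hinv : 0 < (α - 1)⁻¹ := inv_pos.2 (by linarith)
        nlinarith
    have hval : phiF α (1 + 1) - phiF α 1 - phiF α 1 = (α - 1)⁻¹ * ((2:ℝ) ^ α - 2) := by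
      rw [hphi2, hphi1]
      ring
    rw [hval] at hk11
    have hnn11 := hnn 1 1 zero_le_one zero_le_one
    rw [hk11] at hnn11
    by_contra hcneg
    push_neg at hcneg
    have hneg : c * ((α - 1)⁻¹ * ((2:ℝ) ^ α - 2)) < 0 := mul_neg_of_neg_of_pos hcneg hD
    linarith

lemma forward_direction (α : ℝ) (hα : 0 < α) :
    ∀ F : ∀ {X Y : Type} [Fintype X] [Fintype Y], (X → ℝ) → (Y → ℝ) → (X → Y) → ℝ,
      TsallisConds α F →
      ∃ c : ℝ, 0 ≤ c ∧ ∀ {X Y : Type} [Fintype X] [Fintype Y]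
        (p : X → ℝ) (q : Y → ℝ) (f : X → Y),
        IsMeas p → IsMeas q → IsMP p q f →
        F p q f = c * (tsallisExt α p - tsallisExt α q) := by
  intro F hF
  have hmax : ∀ a : ℝ, 0 ≤ a → max a 0 = a := fun a ha => max_eq_left ha
  set kcl : ℝ → ℝ → ℝ := fun a b => kap F (max a 0) (max b 0) with hkcl
  have hkcl_eq : ∀ a b : ℝ, 0 ≤ a → 0 ≤ b → kcl a b = kap F a b := by
    intro a b ha hb
    rw [hkcl]
    dsimp only
    rw [hmax a ha, hmax b hb]
  have hcontk : Continuous fun u : ℝ × ℝ => kcl u.1 u.2 := kap_cont hF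
  have hsymk : ∀ a b : ℝ, 0 ≤ a → 0 ≤ b → kcl a b = kcl b a := by
    intro a b ha hb
    rw [hkcl_eq a b ha hb, hkcl_eq b a hb ha]
    exact kap_symm hF ha hb
  have hcock : ∀ a b c : ℝ, 0 ≤ a → 0 ≤ b → 0 ≤ c →
      kcl a b + kcl (a + b) c = kcl b c + kcl a (b + c) := by
    intro a b c ha hb hc
    rw [hkcl_eq a b ha hb, hkcl_eq (a+b) c (by linarith) hc,
      hkcl_eq b c hb hc, hkcl_eq a (b+c) ha (by linarith)]
    exact kap_cocycle hF ha hb hc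
  have hhomk : ∀ l a b : ℝ, 0 ≤ l → 0 ≤ a → 0 ≤ b →
      kcl (l * a) (l * b) = l ^ α * kcl a b := by
    intro l a b hl ha hb
    rw [hkcl_eq _ _ (mul_nonneg hl ha) (mul_nonneg hl hb), hkcl_eq a b ha hb]
    exact kap_hom hF hl ha hb
  have hzerok : ∀ a : ℝ, 0 ≤ a → kcl a 0 = 0 := by
    intro a ha
    rw [hkcl_eq a 0 ha le_rfl]
    exact kap_zero hF ha
  have hnnk : ∀ a b : ℝ, 0 ≤ a → 0 ≤ b → 0 ≤ kcl a b := by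
    intro a b ha hb
    rw [hkcl_eq a b ha hb]
    exact kap_nonneg hF ha hb
  obtain ⟨c, hc0, hsol⟩ := cocycle_solution hα kcl hcontk hsymk hcock hhomk hzerok hnnk
  have hkap : ∀ a b : ℝ, 0 ≤ a → 0 ≤ b →
      kap F a b = c * (phiF α (a + b) - phiF α a - phiF α b) := by
    intro a b ha hb
    rw [← hkcl_eq a b ha hb]
    exact hsol a b ha hb
  refine ⟨c, hc0, ?_⟩
  intro X Y _ _ p q f hp hq hmp
  rw [K_of_isMP hF hp hq hmp]
  rw [K_formula hF hα hkap (Fintype.card X) X rfl p hp,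
    K_formula hF hα hkap (Fintype.card Y) Y rfl q hq,
    tsallisExt_eq_phiF α hα p hp, tsallisExt_eq_phiF α hα q hq]
  ring

/-- Characterization of Tsallis information loss on finite measure spaces
(Corollary 7), in both directions. -/
theorem stmt16 (α : ℝ) (hα : 0 < α) :
    (∀ F : ∀ {X Y : Type} [Fintype X] [Fintype Y], (X → ℝ) → (Y → ℝ) → (X → Y) → ℝ,
      TsallisConds α F →
      ∃ c : ℝ, 0 ≤ c ∧ ∀ {X Y : Type} [Fintype X] [Fintype Y]
        (p : X → ℝ) (q : Y → ℝ) (f : X → Y),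
        IsMeas p → IsMeas q → IsMP p q f →
        F p q f = c * (tsallisExt α p - tsallisExt α q)) ∧
    (∀ c : ℝ, 0 ≤ c →
      TsallisConds α (fun {X Y : Type} [Fintype X] [Fintype Y]
        (p : X → ℝ) (q : Y → ℝ) (_ : X → Y) =>
        c * (tsallisExt α p - tsallisExt α q))) := by
  constructor
  · exact forward_direction α hα
  · exact fun c hc => tsallisConds_const α hα c hc
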